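/- Let A = (f₁, f₂, f₄, f₉). Then det(f₁ f₂ f₄ f₉) ≡ 2 (mod 3); the set 𝒢_A is well defined, the additive subsemigroup S_A of ℤ⁴ generated by 𝒢_A is pointed (S_A ∩ (−S_A) = {0}), and the convex cone in ℝ⁴ generated by 𝒢_A equals the convex cone generated by the five vectors (0,0,0,1), (0,1,0,0), (0,2,3,0), (1,0,0,−1), (1,1,3,0). -/

import Mathlib

/-- The nine lattice points `f₁, …, f₉` (0-indexed as `f 0, …, f 8`). -/
def f : Fin 9 → (Fin 4 → ℤ) :=
  ![![1,0,0,0], ![0,1,0,0], ![1,2,3,0], ![0,0,0,1], ![0,3,3,1],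
    ![0,2,2,1], ![1,1,1,0], ![1,2,2,0], ![0,1,1,1]]

/-- The Hilbert basis `ℋ = {f₁, …, f₉}`. -/
def Hset : Set (Fin 4 → ℤ) := Set.range f

/-- The ordered tuple `A = (f₁, f₂, f₄, f₉)`. -/
def A : Fin 4 → (Fin 4 → ℤ) := ![f 0, f 1, f 3, f 8]

/-- The 4×4 integer matrix whose columns are the members of a family of four vectors. -/
def colMat (c : Fin 4 → (Fin 4 → ℤ)) : Matrix (Fin 4) (Fin 4) ℤ :=
  Matrix.of fun i j => c j i

/-- The set `𝒢_A = ℋ ∪ {g − aⱼ : g ∈ ℋ∖A, det of (A with column aⱼ replaced by g) ≢ 0 mod 3}`. -/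
def GA : Set (Fin 4 → ℤ) :=
  Hset ∪ {x | ∃ g ∈ Hset, (∀ j, g ≠ A j) ∧
    ∃ j : Fin 4, x = g - A j ∧ (((colMat (Function.update A j g)).det : ZMod 3) ≠ 0)}

/-- The subsemigroup `S_A` of `ℤ⁴` generated by `𝒢_A`. -/
def SA : AddSubmonoid (Fin 4 → ℤ) := AddSubmonoid.closure GA

/-- Coercion of an integer vector to a real vector. -/
def toR (v : Fin 4 → ℤ) : Fin 4 → ℝ := fun j => (v j : ℝ)

/-- The convex cone in `ℝ⁴` generated by a set of integer vectors. -/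
def coneOf (T : Set (Fin 4 → ℤ)) : Set (Fin 4 → ℝ) :=
  {x | ∃ s : Finset (Fin 4 → ℤ), ↑s ⊆ T ∧ ∃ c : (Fin 4 → ℤ) → ℝ,
    (∀ v, 0 ≤ c v) ∧ x = ∑ v ∈ s, c v • toR v}

/- ### Auxiliary lemmas -/

lemma zero_mem_coneOf (T : Set (Fin 4 → ℤ)) : (0 : Fin 4 → ℝ) ∈ coneOf T :=
  ⟨∅, by simp, fun _ => 0, fun _ => le_refl 0, by simp⟩

lemma smul_mem_coneOf {T : Set (Fin 4 → ℤ)} {x : Fin 4 → ℝ} (r : ℝ) (hr : 0 ≤ r)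
    (hx : x ∈ coneOf T) : r • x ∈ coneOf T := by
  obtain ⟨s, hs, c, hc, rfl⟩ := hx
  refine ⟨s, hs, fun v => r * c v, fun v => mul_nonneg hr (hc v), ?_⟩
  rw [Finset.smul_sum]
  exact Finset.sum_congr rfl fun v _ => (mul_smul r (c v) (toR v)).symm

lemma add_mem_coneOf {T : Set (Fin 4 → ℤ)} {x y : Fin 4 → ℝ}
    (hx : x ∈ coneOf T) (hy : y ∈ coneOf T) : x + y ∈ coneOf T := by
  obtain ⟨s, hs, c, hc, rfl⟩ := hx
  obtain ⟨t, ht, d, hd, rfl⟩ := hy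
  refine ⟨s ∪ t, ?_, fun v => (if v ∈ s then c v else 0) + (if v ∈ t then d v else 0),
    fun v => add_nonneg (by by_cases h : v ∈ s <;> simp [h, hc v])
      (by by_cases h : v ∈ t <;> simp [h, hd v]), ?_⟩
  · intro v hv
    rcases Finset.mem_union.1 hv with h | h
    exacts [hs h, ht h]
  · have h1 : ∀ v ∈ s ∪ t,
        ((if v ∈ s then c v else 0) + (if v ∈ t then d v else 0)) • toR v
          = (if v ∈ s then c v • toR v else 0) + (if v ∈ t then d v • toR v else 0) := by
      intro v _
      rw [add_smul]
      congr 1 <;> split <;> simp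
    rw [Finset.sum_congr rfl h1, Finset.sum_add_distrib, Finset.sum_ite_mem,
      Finset.sum_ite_mem, Finset.union_inter_cancel_left, Finset.union_inter_cancel_right]

lemma toR_mem_coneOf {T : Set (Fin 4 → ℤ)} {v : Fin 4 → ℤ} (hv : v ∈ T) :
    toR v ∈ coneOf T :=
  ⟨{v}, by simpa using hv, fun _ => 1, fun _ => zero_le_one, by simp⟩

lemma coneOf_subset {T1 T2 : Set (Fin 4 → ℤ)} (h : ∀ v ∈ T1, toR v ∈ coneOf T2) :
    coneOf T1 ⊆ coneOf T2 := by
  rintro x ⟨s, hs, c, hc, rfl⟩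
  exact Finset.sum_induction _ (· ∈ coneOf T2) (fun a b ha hb => add_mem_coneOf ha hb)
    (zero_mem_coneOf T2) (fun v hv => smul_mem_coneOf (c v) (hc v) (h v (hs hv)))

lemma mem_cone5 {v1 v2 v3 v4 v5 : Fin 4 → ℤ} {x : Fin 4 → ℝ} (r1 r2 r3 r4 r5 : ℝ)
    (h1 : 0 ≤ r1) (h2 : 0 ≤ r2) (h3 : 0 ≤ r3) (h4 : 0 ≤ r4) (h5 : 0 ≤ r5)
    (hx : x = r1 • toR v1 + r2 • toR v2 + r3 • toR v3 + r4 • toR v4 + r5 • toR v5) :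
    x ∈ coneOf {v1, v2, v3, v4, v5} := by
  subst hx
  apply add_mem_coneOf
  apply add_mem_coneOf
  apply add_mem_coneOf
  apply add_mem_coneOf
  · exact smul_mem_coneOf _ h1 (toR_mem_coneOf (by simp))
  · exact smul_mem_coneOf _ h2 (toR_mem_coneOf (by simp))
  · exact smul_mem_coneOf _ h3 (toR_mem_coneOf (by simp))
  · exact smul_mem_coneOf _ h4 (toR_mem_coneOf (by simp))
  · exact smul_mem_coneOf _ h5 (toR_mem_coneOf (by simp))

/-- Enumeration of the members of `𝒢_A`. -/
lemma GA_cases : ∀ v ∈ GA,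
    v = ![0,0,0,1] ∨ v = ![0,1,0,0] ∨ v = ![0,1,1,0] ∨ v = ![0,1,1,1] ∨ v = ![0,2,2,0] ∨
    v = ![0,2,2,1] ∨ v = ![0,2,3,0] ∨ v = ![0,3,3,0] ∨ v = ![0,3,3,1] ∨ v = ![1,0,0,-1] ∨
    v = ![1,0,0,0] ∨ v = ![1,1,1,-1] ∨ v = ![1,1,1,0] ∨ v = ![1,1,3,0] ∨ v = ![1,2,2,-1] ∨
    v = ![1,2,2,0] ∨ v = ![1,2,3,0] := by
  rintro v (⟨i, rfl⟩ | ⟨g, ⟨i, rfl⟩, hne, j, rfl, hdet⟩)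
  · fin_cases i <;> decide
  · fin_cases i <;> fin_cases j <;>
      first
        | decide
        | exact absurd (by decide) (hne 0)
        | exact absurd (by decide) (hne 1)
        | exact absurd (by decide) (hne 2)
        | exact absurd (by decide) (hne 3)
        | exact absurd (by decide) hdet

/-- The positive functional used to show pointedness. -/
def phi (v : Fin 4 → ℤ) : ℤ := 2 * v 0 + v 1 + v 2 + v 3

lemma phi_pos : ∀ v ∈ GA, 0 < phi v := by
  intro v hv
  rcases GA_cases v hv with rfl|rfl|rfl|rfl|rfl|rfl|rfl|rfl|rfl|rfl|rfl|rfl|rfl|rfl|rfl|rfl|rfl <;>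
    decide

theorem stmt_15 :
    ((colMat A).det : ZMod 3) = 2 ∧
    {x : Fin 4 → ℤ | x ∈ SA ∧ -x ∈ SA} = {0} ∧
    coneOf GA = coneOf {![0,0,0,1], ![0,1,0,0], ![0,2,3,0], ![1,0,0,-1], ![1,1,3,0]} := by
  refine ⟨by decide, ?_, ?_⟩
  · -- pointedness
    have key : ∀ x ∈ SA, 0 ≤ phi x ∧ (phi x = 0 → x = 0) := by
      intro x hx
      induction hx using AddSubmonoid.closure_induction with
      | mem v hv =>
          exact ⟨(phi_pos v hv).le, fun h => absurd h (phi_pos v hv).ne'⟩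
      | zero => exact ⟨le_refl 0, fun _ => rfl⟩
      | add x y hx hy ihx ihy =>
          have hadd : phi (x + y) = phi x + phi y := by
            simp only [phi, Pi.add_apply]; ring
          refine ⟨by rw [hadd]; exact add_nonneg ihx.1 ihy.1, fun h => ?_⟩
          rw [hadd] at h
          have hx0 : phi x = 0 := le_antisymm (by linarith [ihy.1]) ihx.1
          have hy0 : phi y = 0 := by linarith
          rw [ihx.2 hx0, ihy.2 hy0, add_zero]
    ext x
    simp only [Set.mem_setOf_eq, Set.mem_singleton_iff]
    constructor
    · rintro ⟨h1, h2⟩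
      have p1 := key x h1
      have p2 := key (-x) h2
      have hneg : phi (-x) = - phi x := by simp only [phi, Pi.neg_apply]; ring
      rw [hneg] at p2
      exact p1.2 (le_antisymm (by linarith [p2.1]) p1.1)
    · rintro rfl
      exact ⟨(SA).zero_mem, by rw [neg_zero]; exact (SA).zero_mem⟩
  · -- cone equality
    apply Set.Subset.antisymm
    · apply coneOf_subset
      intro v hv
      rcases GA_cases v hv with rfl|rfl|rfl|rfl|rfl|rfl|rfl|rfl|rfl|rfl|rfl|rfl|rfl|rfl|rfl|rfl|rfl
      · exact mem_cone5 1 0 0 0 0 (by norm_num) (by norm_num) (by norm_num) (by norm_num)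
          (by norm_num) (by funext k; fin_cases k <;> norm_num [toR])
      · exact mem_cone5 0 1 0 0 0 (by norm_num) (by norm_num) (by norm_num) (by norm_num)
          (by norm_num) (by funext k; fin_cases k <;> norm_num [toR])
      · exact mem_cone5 0 (1/3) (1/3) 0 0 (by norm_num) (by norm_num) (by norm_num) (by norm_num)
          (by norm_num) (by funext k; fin_cases k <;> norm_num [toR])
      · exact mem_cone5 1 (1/3) (1/3) 0 0 (by norm_num) (by norm_num) (by norm_num) (by norm_num)
          (by norm_num) (by funext k; fin_cases k <;> norm_num [toR])
      · exact mem_cone5 0 (2/3) (2/3) 0 0 (by norm_num) (by norm_num) (by norm_num) (by norm_num)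
          (by norm_num) (by funext k; fin_cases k <;> norm_num [toR])
      · exact mem_cone5 1 (2/3) (2/3) 0 0 (by norm_num) (by norm_num) (by norm_num) (by norm_num)
          (by norm_num) (by funext k; fin_cases k <;> norm_num [toR])
      · exact mem_cone5 0 0 1 0 0 (by norm_num) (by norm_num) (by norm_num) (by norm_num)
          (by norm_num) (by funext k; fin_cases k <;> norm_num [toR])
      · exact mem_cone5 0 1 1 0 0 (by norm_num) (by norm_num) (by norm_num) (by norm_num)
          (by norm_num) (by funext k; fin_cases k <;> norm_num [toR])
      · exact mem_cone5 1 1 1 0 0 (by norm_num) (by norm_num) (by norm_num) (by norm_num)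
          (by norm_num) (by funext k; fin_cases k <;> norm_num [toR])
      · exact mem_cone5 0 0 0 1 0 (by norm_num) (by norm_num) (by norm_num) (by norm_num)
          (by norm_num) (by funext k; fin_cases k <;> norm_num [toR])
      · exact mem_cone5 1 0 0 1 0 (by norm_num) (by norm_num) (by norm_num) (by norm_num)
          (by norm_num) (by funext k; fin_cases k <;> norm_num [toR])
      · exact mem_cone5 0 (1/3) (1/3) 1 0 (by norm_num) (by norm_num) (by norm_num) (by norm_num)
          (by norm_num) (by funext k; fin_cases k <;> norm_num [toR])
      · exact mem_cone5 1 (1/3) (1/3) 1 0 (by norm_num) (by norm_num) (by norm_num) (by norm_num)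
          (by norm_num) (by funext k; fin_cases k <;> norm_num [toR])
      · exact mem_cone5 0 0 0 0 1 (by norm_num) (by norm_num) (by norm_num) (by norm_num)
          (by norm_num) (by funext k; fin_cases k <;> norm_num [toR])
      · exact mem_cone5 0 (2/3) (2/3) 1 0 (by norm_num) (by norm_num) (by norm_num) (by norm_num)
          (by norm_num) (by funext k; fin_cases k <;> norm_num [toR])
      · exact mem_cone5 1 (2/3) (2/3) 1 0 (by norm_num) (by norm_num) (by norm_num) (by norm_num)
          (by norm_num) (by funext k; fin_cases k <;> norm_num [toR])
      · exact mem_cone5 0 1 0 0 1 (by norm_num) (by norm_num) (by norm_num) (by norm_num)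
          (by norm_num) (by funext k; fin_cases k <;> norm_num [toR])
    · apply coneOf_subset
      intro v hv
      apply toR_mem_coneOf
      rcases hv with rfl | rfl | rfl | rfl | rfl
      · exact Or.inl ⟨3, by decide⟩
      · exact Or.inl ⟨1, by decide⟩
      · exact Or.inr ⟨f 2, ⟨2, rfl⟩, by decide, 0, by decide, by decide⟩
      · exact Or.inr ⟨f 6, ⟨6, rfl⟩, by decide, 3, by decide, by decide⟩
      · exact Or.inr ⟨f 2, ⟨2, rfl⟩, by decide, 1, by decide, by decide⟩
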